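/- Let m > 1, σ ≥ 0, N ≥ 1, and let f : I → (0,∞) be a positive function on an open interval I ⊂ (0,∞) such that ξ ↦ f(ξ)^m is twice differentiable on I and f satisfies the profile ODE on I. Define X(ξ) = √(m(m−1)) ξ^{−1} f(ξ)^{(m−1)/2}, Y(ξ) = (2√(m(m−1))/(m−1)) · (d/dξ)(f(ξ)^{(m−1)/2}), Z(ξ) = (m−1) ξ^σ f(ξ)^{m−1}, and ρ(ξ) = f(ξ)^{−(m−1)/2}/√(m(m−1)). Then for every ξ ∈ I: X'(ξ) = ρ(ξ)·[((m−1)/2) X(ξ)Y(ξ) − X(ξ)²], Y'(ξ) = ρ(ξ)·[−((m+1)/2) Y(ξ)² + 1 − Z(ξ) − (N−1) X(ξ)Y(ξ)], and Z'(ξ) = ρ(ξ)·Z(ξ)·[(m−1) Y(ξ) + σ X(ξ)]. -/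

import Mathlib

set_option maxHeartbeats 1000000


open Set

/-- the phase-space variables
`X = √(m(m-1)) ξ⁻¹ f^{(m-1)/2}`, `Y = (2√(m(m-1))/(m-1)) (f^{(m-1)/2})'`,
`Z = (m-1) ξ^σ f^{m-1}` transform the profile ODE into the autonomous system
`Ẋ = ((m-1)/2)XY - X²`, `Ẏ = -((m+1)/2)Y² + 1 - Z - (N-1)XY`,
`Ż = Z[(m-1)Y + σX]` after the time reparametrization with factor
`ρ = f^{-(m-1)/2}/√(m(m-1))`. -/
theorem phase_space_transformation
    (m σ N : ℝ) (hm : 1 < m) (hσ : 0 ≤ σ) (hN : 1 ≤ N)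
    (a b : ℝ) (hI : Ioo a b ⊆ Ioi (0:ℝ))
    (f : ℝ → ℝ) (hf : ∀ ξ ∈ Ioo a b, 0 < f ξ)
    (hd1 : ∀ ξ ∈ Ioo a b, DifferentiableAt ℝ (fun t => f t ^ m) ξ)
    (hd2 : ∀ ξ ∈ Ioo a b, DifferentiableAt ℝ (deriv fun t => f t ^ m) ξ)
    (hode : ∀ ξ ∈ Ioo a b,
      deriv (deriv fun t => f t ^ m) ξ + ((N - 1) / ξ) * deriv (fun t => f t ^ m) ξ
        - f ξ / (m - 1) + ξ ^ σ * f ξ ^ m = 0)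
    (X Y Z ρ : ℝ → ℝ)
    (hX : ∀ ξ : ℝ, X ξ = Real.sqrt (m * (m - 1)) * ξ⁻¹ * f ξ ^ ((m - 1) / 2))
    (hY : ∀ ξ : ℝ, Y ξ =
      2 * Real.sqrt (m * (m - 1)) / (m - 1) * deriv (fun t => f t ^ ((m - 1) / 2)) ξ)
    (hZ : ∀ ξ : ℝ, Z ξ = (m - 1) * ξ ^ σ * f ξ ^ (m - 1))
    (hρ : ∀ ξ : ℝ, ρ ξ = f ξ ^ (-((m - 1) / 2)) / Real.sqrt (m * (m - 1))) :
    ∀ ξ ∈ Ioo a b,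
      deriv X ξ = ρ ξ * ((m - 1) / 2 * X ξ * Y ξ - X ξ ^ 2) ∧
      deriv Y ξ = ρ ξ * (-((m + 1) / 2) * Y ξ ^ 2 + 1 - Z ξ - (N - 1) * X ξ * Y ξ) ∧
      deriv Z ξ = ρ ξ * (Z ξ * ((m - 1) * Y ξ + σ * X ξ)) := by
  intro ξ hξ
  have hm0 : (0:ℝ) < m := by linarith
  have hm1 : (0:ℝ) < m - 1 := by linarith
  have hξ0 : (0:ℝ) < ξ := hI hξ
  have hF : 0 < f ξ := hf ξ hξ
  set s := Real.sqrt (m * (m - 1)) with hsdef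
  have hs0 : 0 < s := Real.sqrt_pos.mpr (by positivity)
  have hs : s * s = m * (m - 1) := Real.mul_self_sqrt (by positivity)
  set g : ℝ → ℝ := fun t => f t ^ m with hgdef
  set q : ℝ := (m - 1) / 2 / m with hqdef
  have key : ∀ (α : ℝ), ∀ η ∈ Ioo a b,
      HasDerivAt (fun t => f t ^ α) (deriv g η * (α / m) * g η ^ (α / m - 1)) η := by
    intro α η hη
    have hFη : 0 < f η := hf η hη
    have hgη : HasDerivAt g (deriv g η) η := (hd1 η hη).hasDerivAt
    have hgpos : (0:ℝ) < g η := Real.rpow_pos_of_pos hFη m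
    have h2 := hgη.rpow_const (p := α / m) (Or.inl hgpos.ne')
    refine h2.congr_of_eventuallyEq ?_
    filter_upwards [isOpen_Ioo.mem_nhds hη] with t ht
    have hFt : 0 < f t := hf t ht
    show f t ^ α = (f t ^ m) ^ (α / m)
    rw [← Real.rpow_mul hFt.le]
    congr 1
    field_simp
  -- abbreviations at ξ
  set F := f ξ with hFdef
  set A := F ^ ((m - 1) / 2) with hAdef
  set B := F ^ m with hBdef
  set W := ξ ^ σ with hWdef
  set D := deriv g ξ with hDdef
  set E := deriv (deriv g) ξ with hEdef
  have hA0 : 0 < A := Real.rpow_pos_of_pos hF _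
  have hB0 : 0 < B := Real.rpow_pos_of_pos hF _
  have hW0 : 0 < W := Real.rpow_pos_of_pos hξ0 _
  have hgξ : g ξ = B := rfl
  -- rpow conversions
  have hAB : A * A * F = B := by
    have h1 : A * A = F ^ (m - 1) := by
      rw [hAdef, ← Real.rpow_add hF]
      norm_num
    rw [h1, hBdef, ← Real.rpow_add_one hF.ne']
    norm_num
  have c1 : g ξ ^ (q - 1) = A / B := by
    rw [hgξ, hBdef, ← Real.rpow_mul hF.le]
    rw [show m * (q - 1) = (m - 1) / 2 - m by rw [hqdef]; field_simp]
    rw [Real.rpow_sub hF, hAdef]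
  have c2 : g ξ ^ (q - 1 - 1) = A / (B * B) := by
    rw [hgξ, hBdef, ← Real.rpow_mul hF.le]
    rw [show m * (q - 1 - 1) = (m - 1) / 2 - m - m by rw [hqdef]; field_simp]
    rw [Real.rpow_sub hF, Real.rpow_sub hF, hAdef, div_div]
  have c3 : g ξ ^ ((m - 1) / m - 1) = F⁻¹ := by
    rw [hgξ, hBdef, ← Real.rpow_mul hF.le]
    rw [show m * ((m - 1) / m - 1) = -1 by field_simp; ring]
    rw [Real.rpow_neg_one]
  have c4 : F ^ (m - 1) = A * A := by
    rw [hAdef, ← Real.rpow_add hF]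
    norm_num
  have c5 : F ^ (-((m - 1) / 2)) = A⁻¹ := by
    rw [Real.rpow_neg hF.le, hAdef]
  have c6 : ξ ^ (σ - 1) = W / ξ := by
    rw [Real.rpow_sub hξ0, Real.rpow_one, hWdef]
  -- derivative of f^((m-1)/2) at ξ
  have hU : HasDerivAt (fun t => f t ^ ((m - 1) / 2)) (D * q * g ξ ^ (q - 1)) ξ := by
    have := key ((m - 1) / 2) ξ hξ
    rwa [show (m - 1) / 2 / m = q from rfl] at this
  have hu' : deriv (fun t => f t ^ ((m - 1) / 2)) ξ = D * q * (A / B) := by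
    rw [hU.deriv, c1]
  -- X
  have hXfun : X = fun t => s * t⁻¹ * f t ^ ((m - 1) / 2) := funext hX
  have hXd : deriv X ξ = s * -(ξ ^ 2)⁻¹ * A + s * ξ⁻¹ * (D * q * (A / B)) := by
    rw [hXfun]
    have h := ((hasDerivAt_inv hξ0.ne').const_mul s).mul hU
    rw [show (fun t => s * t⁻¹ * f t ^ ((m - 1) / 2)) = ((fun y => s * y⁻¹) * fun t => f t ^ ((m - 1) / 2)) from rfl, h.deriv, c1]
  -- Z
  have hZfun : Z = fun t => (m - 1) * t ^ σ * f t ^ (m - 1) := funext hZ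
  have hZd : deriv Z ξ = (m - 1) * (σ * (W / ξ)) * (A * A)
      + (m - 1) * W * (D * ((m - 1) / m) * F⁻¹) := by
    rw [hZfun]
    have h := ((Real.hasDerivAt_rpow_const (p := σ) (Or.inl hξ0.ne')).const_mul (m - 1)).mul
      (key (m - 1) ξ hξ)
    rw [show (fun t => (m - 1) * t ^ σ * f t ^ (m - 1)) = ((fun y => (m - 1) * y ^ σ) * fun t => f t ^ (m - 1)) from rfl, h.deriv, c3, c4, c6]
  -- Y
  have hYd : deriv Y ξ = 2 * s / (m - 1) * q *
      (E * (A / B) + D * (D * (q - 1) * (A / (B * B)))) := by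
    have hYfun : Y =ᶠ[nhds ξ] fun t =>
        2 * s / (m - 1) * q * (deriv g t * g t ^ (q - 1)) := by
      filter_upwards [isOpen_Ioo.mem_nhds hξ] with t ht
      rw [hY t, (key ((m - 1) / 2) t ht).deriv]
      ring
    rw [hYfun.deriv_eq]
    have h1 : HasDerivAt (deriv g) E ξ := (hd2 ξ hξ).hasDerivAt
    have h2 : HasDerivAt (fun t => g t ^ (q - 1)) (D * (q - 1) * g ξ ^ (q - 1 - 1)) ξ :=
      (hd1 ξ hξ).hasDerivAt.rpow_const (Or.inl (Real.rpow_pos_of_pos hF m).ne')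
    have h := ((h1.mul h2).const_mul (2 * s / (m - 1) * q))
    rw [show (fun t => 2 * s / (m - 1) * q * (deriv g t * g t ^ (q - 1))) = (fun y => 2 * s / (m - 1) * q * (deriv g * fun t => g t ^ (q - 1)) y) from rfl, h.deriv, c1, c2]
  -- ODE
  have hE : E = F / (m - 1) - W * B - (N - 1) / ξ * D := by
    have := hode ξ hξ
    rw [← hDdef, ← hEdef, ← hFdef, ← hWdef, ← hBdef] at this
    linarith
  -- final algebra
  rw [hρ ξ, hX ξ, hY ξ, hZ ξ, ← hFdef, c5, c4, hu', ← hAdef]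
  refine ⟨?_, ?_, ?_⟩
  · rw [hXd, ← hAB]
    rw [hqdef]
    field_simp [hA0.ne', hF.ne', hs0.ne', hξ0.ne', hm0.ne', hm1.ne']
    ring
  · rw [hYd, hE, ← hAB]
    rw [hqdef]
    field_simp [hA0.ne', hF.ne', hs0.ne', hξ0.ne', hm0.ne', hm1.ne']
    ring_nf
    rw [show s ^ 2 = m * (m - 1) from by rw [sq]; exact hs]
    ring
  · rw [hZd, ← hAB]
    rw [hqdef]
    field_simp [hA0.ne', hF.ne', hs0.ne', hξ0.ne', hm0.ne', hm1.ne']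
    ring
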